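/- arXiv:1406.5695 — 3 statements merged into one kernel-verified Lean document; each statement's English description precedes it below -/
import Mathlib

section
/- For 0 < q < 1 and 0 ≤ a < 1, let G_{aq^n} be independent geometric random variables with P(G_p = k) = (1-p)p^k for k ∈ ℕ. Then the sum S = Σ_{n=0}^∞ G_{aq^n} is almost surely finite, and the random variable R = (1-q)^{-1} q^S satisfies P(R = (1-q)^{-1} q^n) = a^n (a;q)_∞ / (q;q)_n for all n ∈ ℕ, where (x;q)_m = Π_{j=0}^{m-1}(1 - x q^j) and (x;q)_∞ = Π_{j=0}^∞ (1 - x q^j). -/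
open MeasureTheory ProbabilityTheory

/-- The finite q-Pochhammer symbol `(x;q)_n = ∏_{j=0}^{n-1} (1 - x q^j)`. -/
noncomputable def qPoch (x q : ℝ) (n : ℕ) : ℝ := ∏ j ∈ Finset.range n, (1 - x * q ^ j)

/-- The infinite q-Pochhammer symbol `(x;q)_∞ = ∏_{j=0}^∞ (1 - x q^j)`. -/
noncomputable def qPochInf (x q : ℝ) : ℝ := ∏' j : ℕ, (1 - x * q ^ j)

lemma qPoch_zero (x q : ℝ) : qPoch x q 0 = 1 := by simp [qPoch]

lemma qPoch_succ (x q : ℝ) (n : ℕ) :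
    qPoch x q (n + 1) = qPoch x q n * (1 - x * q ^ n) := by
  simp [qPoch, Finset.prod_range_succ]

lemma qPoch_succ' (x q : ℝ) (n : ℕ) :
    qPoch x q (n + 1) = (1 - x) * qPoch (x * q) q n := by
  have h : ∀ j : ℕ, 1 - x * q ^ (j + 1) = 1 - (x * q) * q ^ j := by
    intro j; ring
  simp only [qPoch, Finset.prod_range_succ', pow_zero, mul_one, h]
  ring

lemma qPoch_nonneg {x q : ℝ} (hx0 : 0 ≤ x) (hx1 : x ≤ 1) (hq0 : 0 ≤ q) (hq1 : q ≤ 1)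
    (n : ℕ) : 0 ≤ qPoch x q n := by
  refine Finset.prod_nonneg fun j _ => ?_
  have h1 : x * q ^ j ≤ 1 := by
    have := pow_le_one₀ hq0 hq1 (n := j)
    nlinarith [pow_nonneg hq0 j]
  linarith

lemma qPoch_pos {x q : ℝ} (hx0 : 0 ≤ x) (hx1 : x < 1) (hq0 : 0 ≤ q) (hq1 : q ≤ 1)
    (n : ℕ) : 0 < qPoch x q n := by
  refine Finset.prod_pos fun j _ => ?_
  have h1 : x * q ^ j < 1 := by
    have := pow_le_one₀ hq0 hq1 (n := j)
    nlinarith [pow_nonneg hq0 j]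
  linarith

/-- The key q-binomial convolution identity. -/
lemma qPoch_key_sum {q : ℝ} (hq0 : 0 < q) (hq1 : q < 1) (N m : ℕ) :
    ∑ k ∈ Finset.range (m + 1),
        q ^ (N * k) * (qPoch (q ^ N) q (m - k) / qPoch q q (m - k))
      = qPoch (q ^ (N + 1)) q m / qPoch q q m := by
  induction m with
  | zero => simp [qPoch_zero]
  | succ m ih =>
    have hQ : ∀ j : ℕ, qPoch q q j ≠ 0 :=
      fun j => ne_of_gt (qPoch_pos hq0.le hq1 hq0.le hq1.le j)
    rw [Finset.sum_range_succ']
    have hterm : ∀ k ∈ Finset.range (m + 1),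
        q ^ (N * (k + 1)) * (qPoch (q ^ N) q (m + 1 - (k + 1)) / qPoch q q (m + 1 - (k + 1)))
          = q ^ N * (q ^ (N * k) * (qPoch (q ^ N) q (m - k) / qPoch q q (m - k))) := by
      intro k _
      have h1 : m + 1 - (k + 1) = m - k := by omega
      have h2 : N * (k + 1) = N * k + N := by ring
      rw [h1, h2, pow_add]
      ring
    rw [Finset.sum_congr rfl hterm, ← Finset.mul_sum, ih]
    have hA : qPoch (q ^ N) q (m + 1) = (1 - q ^ N) * qPoch (q ^ (N + 1)) q m := by
      rw [qPoch_succ', pow_succ]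
    have hB : qPoch q q (m + 1) = qPoch q q m * (1 - q * q ^ m) := qPoch_succ q q m
    have hC : qPoch (q ^ (N + 1)) q (m + 1)
        = qPoch (q ^ (N + 1)) q m * (1 - q ^ (N + 1) * q ^ m) := qPoch_succ _ q m
    have hD : (1 : ℝ) - q * q ^ m ≠ 0 := by
      have : q * q ^ m < 1 := by
        have h1 : q ^ (m + 1) < 1 := pow_lt_one₀ hq0.le hq1 (Nat.succ_ne_zero m)
        rw [pow_succ'] at h1; exact h1
      linarith
    simp only [Nat.mul_zero, pow_zero, Nat.sub_zero, one_mul]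
    rw [hA, hB, hC]
    have hQm := hQ m
    field_simp
    ring

/-- The real-valued convolution identity for the induction step. -/
lemma qPoch_conv_id {q a : ℝ} (hq0 : 0 < q) (hq1 : q < 1) (ha0 : 0 ≤ a) (ha1 : a < 1)
    (N m : ℕ) :
    ∑ k ∈ Finset.range (m + 1),
        (a ^ (m - k) * qPoch a q N * qPoch (q ^ N) q (m - k) / qPoch q q (m - k))
          * ((1 - a * q ^ N) * (a * q ^ N) ^ k)
      = a ^ m * qPoch a q (N + 1) * qPoch (q ^ (N + 1)) q m / qPoch q q m := by
  have h := qPoch_key_sum hq0 hq1 N m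
  have hterm : ∀ k ∈ Finset.range (m + 1),
      (a ^ (m - k) * qPoch a q N * qPoch (q ^ N) q (m - k) / qPoch q q (m - k))
          * ((1 - a * q ^ N) * (a * q ^ N) ^ k)
        = (a ^ m * qPoch a q N * (1 - a * q ^ N))
            * (q ^ (N * k) * (qPoch (q ^ N) q (m - k) / qPoch q q (m - k))) := by
    intro k hk
    have hk' : k ≤ m := by
      have := Finset.mem_range.mp hk; omega
    have hpow : a ^ (m - k) * (a * q ^ N) ^ k = a ^ m * q ^ (N * k) := by
      rw [mul_pow, ← pow_mul, ← mul_assoc, ← pow_add, Nat.sub_add_cancel hk']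
    linear_combination
      (qPoch a q N * qPoch (q ^ N) q (m - k) / qPoch q q (m - k) * (1 - a * q ^ N)) * hpow
  rw [Finset.sum_congr rfl hterm, ← Finset.mul_sum, h, qPoch_succ]
  ring

/-- Distribution of the partial sums `S_N = ∑_{n<N} G_n`. -/
lemma geom_partial_sum_dist
    {Ω : Type*} [MeasureSpace Ω] [IsProbabilityMeasure (ℙ : Measure Ω)]
    {q a : ℝ} (hq0 : 0 < q) (hq1 : q < 1) (ha0 : 0 ≤ a) (ha1 : a < 1)
    (G : ℕ → Ω → ℕ) (hmeas : ∀ n, Measurable (G n))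
    (hindep : iIndepFun G ℙ)
    (hdist : ∀ n k, ℙ {ω | G n ω = k}
      = ENNReal.ofReal ((1 - a * q ^ n) * (a * q ^ n) ^ k)) :
    ∀ N m : ℕ, ℙ {ω | ∑ n ∈ Finset.range N, G n ω = m}
      = ENNReal.ofReal (a ^ m * qPoch a q N * qPoch (q ^ N) q m / qPoch q q m) := by
  have hpochA : ∀ n, 0 ≤ qPoch a q n := qPoch_nonneg ha0 ha1.le hq0.le hq1.le
  have hpochQN : ∀ M j, 0 ≤ qPoch (q ^ M) q j := fun M j =>
    qPoch_nonneg (pow_nonneg hq0.le M) (pow_le_one₀ hq0.le hq1.le) hq0.le hq1.le j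
  have hpochQ : ∀ j, 0 < qPoch q q j := qPoch_pos hq0.le hq1 hq0.le hq1.le
  have haqn : ∀ M : ℕ, 0 ≤ a * q ^ M ∧ a * q ^ M < 1 := fun M =>
    ⟨mul_nonneg ha0 (pow_nonneg hq0.le M), by
      nlinarith [pow_le_one₀ hq0.le hq1.le (n := M), pow_nonneg hq0.le M]⟩
  intro N
  induction N with
  | zero =>
    intro m
    cases m with
    | zero =>
      have : {ω : Ω | ∑ n ∈ Finset.range 0, G n ω = 0} = Set.univ := by
        ext ω; simp
      rw [this]
      simp [qPoch_zero]
    | succ m =>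
      have h0 : qPoch ((q : ℝ) ^ 0) q (m + 1) = 0 := by
        rw [pow_zero, qPoch_succ']; ring
      have hset : {ω : Ω | ∑ n ∈ Finset.range 0, G n ω = m + 1} = (∅ : Set Ω) := by
        ext ω; simp
      rw [hset, h0]
      simp
  | succ N ih =>
    intro m
    have hSmeas : Measurable fun ω => ∑ n ∈ Finset.range N, G n ω :=
      Finset.measurable_sum _ fun i _ => hmeas i
    have hfun : (∑ j ∈ Finset.range N, G j) = fun ω => ∑ j ∈ Finset.range N, G j ω := by
      funext ω; simp
    have hSG : IndepFun (fun ω => ∑ j ∈ Finset.range N, G j ω) (G N) ℙ := by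
      have h := hindep.indepFun_sum_range_succ hmeas N
      rwa [hfun] at h
    have hset : {ω : Ω | ∑ n ∈ Finset.range (N + 1), G n ω = m}
        = ⋃ k ∈ Finset.range (m + 1),
            ((fun ω => ∑ n ∈ Finset.range N, G n ω) ⁻¹' {m - k} ∩ G N ⁻¹' {k}) := by
      ext ω
      simp only [Set.mem_setOf_eq, Finset.sum_range_succ, Set.mem_iUnion, Set.mem_inter_iff,
        Set.mem_preimage, Set.mem_singleton_iff, Finset.mem_range, exists_prop]
      constructor
      · intro hsum; exact ⟨G N ω, by omega, by omega, rfl⟩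
      · rintro ⟨k, hk, h1, h2⟩; omega
    have hdisj : Set.PairwiseDisjoint (↑(Finset.range (m + 1)))
        (fun k => (fun ω => ∑ n ∈ Finset.range N, G n ω) ⁻¹' {m - k} ∩ G N ⁻¹' {k}) := by
      intro i _ j _ hij
      refine Set.disjoint_left.mpr ?_
      rintro ω ⟨_, h1⟩ ⟨_, h2⟩
      simp only [Set.mem_preimage, Set.mem_singleton_iff] at h1 h2
      exact hij (h1.symm.trans h2)
    have hmeasU : ∀ k ∈ Finset.range (m + 1), MeasurableSet
        ((fun ω => ∑ n ∈ Finset.range N, G n ω) ⁻¹' {m - k} ∩ G N ⁻¹' {k}) :=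
      fun k _ => (hSmeas (measurableSet_singleton _)).inter
        ((hmeas N) (measurableSet_singleton _))
    rw [hset, measure_biUnion_finset hdisj hmeasU]
    have hFnn : ∀ j : ℕ, 0 ≤ a ^ j * qPoch a q N * qPoch (q ^ N) q j / qPoch q q j :=
      fun j => div_nonneg (mul_nonneg (mul_nonneg (pow_nonneg ha0 j) (hpochA N))
        (hpochQN N j)) (hpochQ j).le
    have hterm : ∀ k ∈ Finset.range (m + 1),
        ℙ ((fun ω => ∑ n ∈ Finset.range N, G n ω) ⁻¹' {m - k} ∩ G N ⁻¹' {k})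
          = ENNReal.ofReal
              ((a ^ (m - k) * qPoch a q N * qPoch (q ^ N) q (m - k) / qPoch q q (m - k))
                * ((1 - a * q ^ N) * (a * q ^ N) ^ k)) := by
      intro k hk
      rw [hSG.measure_inter_preimage_eq_mul _ _ (measurableSet_singleton _)
        (measurableSet_singleton _)]
      have h1 : (fun ω => ∑ n ∈ Finset.range N, G n ω) ⁻¹' {m - k}
          = {ω : Ω | ∑ n ∈ Finset.range N, G n ω = m - k} := rfl
      have h2 : G N ⁻¹' {k} = {ω : Ω | G N ω = k} := rfl
      rw [h1, h2, ih (m - k), hdist N k, ← ENNReal.ofReal_mul (hFnn (m - k))]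
    rw [Finset.sum_congr rfl hterm, ← ENNReal.ofReal_sum_of_nonneg
      (fun k _ => mul_nonneg (hFnn (m - k))
        (mul_nonneg (by linarith [(haqn N).2]) (pow_nonneg (haqn N).1 k))),
      qPoch_conv_id hq0 hq1 ha0 ha1 N m]

/-- Convergence of the finite q-Pochhammer symbols to the infinite one. -/
lemma tendsto_qPoch {q a : ℝ} (hq0 : 0 < q) (hq1 : q < 1) (ha0 : 0 ≤ a) (ha1 : a < 1) :
    Filter.Tendsto (fun N => qPoch a q N) Filter.atTop (nhds (qPochInf a q)) := by
  have haqn : ∀ j : ℕ, 0 ≤ a * q ^ j ∧ a * q ^ j < 1 := fun j =>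
    ⟨mul_nonneg ha0 (pow_nonneg hq0.le j), by
      nlinarith [pow_le_one₀ hq0.le hq1.le (n := j), pow_nonneg hq0.le j]⟩
  have hf0 : ∀ j : ℕ, 0 ≤ 1 - a * q ^ j := fun j => by linarith [(haqn j).2]
  have hf1 : ∀ j : ℕ, 1 - a * q ^ j ≤ 1 := fun j => by linarith [(haqn j).1]
  have hanti : Antitone (fun s : Finset ℕ => ∏ j ∈ s, (1 - a * q ^ j)) := by
    intro s t hst
    have h1 : ∏ j ∈ t \ s, (1 - a * q ^ j) ≤ 1 :=
      Finset.prod_le_one (fun j _ => hf0 j) (fun j _ => hf1 j)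
    have h2 : (0:ℝ) ≤ ∏ j ∈ s, (1 - a * q ^ j) := Finset.prod_nonneg fun j _ => hf0 j
    calc ∏ j ∈ t, (1 - a * q ^ j)
        = (∏ j ∈ t \ s, (1 - a * q ^ j)) * ∏ j ∈ s, (1 - a * q ^ j) :=
          (Finset.prod_sdiff hst).symm
      _ ≤ 1 * ∏ j ∈ s, (1 - a * q ^ j) := mul_le_mul_of_nonneg_right h1 h2
      _ = ∏ j ∈ s, (1 - a * q ^ j) := one_mul _
  have hbdd : BddBelow (Set.range fun s : Finset ℕ => ∏ j ∈ s, (1 - a * q ^ j)) := by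
    refine ⟨0, ?_⟩
    rintro x ⟨s, rfl⟩
    exact Finset.prod_nonneg fun j _ => hf0 j
  have hprod : HasProd (fun j : ℕ => 1 - a * q ^ j)
      (⨅ s : Finset ℕ, ∏ j ∈ s, (1 - a * q ^ j)) :=
    tendsto_atTop_ciInf hanti hbdd
  have heq : qPochInf a q = ⨅ s : Finset ℕ, ∏ j ∈ s, (1 - a * q ^ j) := hprod.tprod_eq
  rw [heq]
  have h := hprod.tendsto_prod_nat
  simpa only [qPoch] using h

/-- If `(G_{a q^n})_n` are independent geometric random variables with
`P(G_p = k) = (1-p) p^k`, then `S = ∑ G_{a q^n}` is a.s. finite and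
`R = (1-q)^{-1} q^S` satisfies `P(R = (1-q)^{-1} q^m) = a^m (a;q)_∞ / (q;q)_m`. -/
theorem qGamma_law_of_geometric_sums
    {Ω : Type*} [MeasureSpace Ω] [IsProbabilityMeasure (ℙ : Measure Ω)]
    (q a : ℝ) (hq0 : 0 < q) (hq1 : q < 1) (ha0 : 0 ≤ a) (ha1 : a < 1)
    (G : ℕ → Ω → ℕ) (hmeas : ∀ n, Measurable (G n))
    (hindep : iIndepFun G ℙ)
    (hdist : ∀ n k, ℙ {ω | G n ω = k}
      = ENNReal.ofReal ((1 - a * q ^ n) * (a * q ^ n) ^ k)) :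
    (∀ᵐ ω ∂ℙ, Summable (fun n => (G n ω : ℝ))) ∧
    ∀ m : ℕ,
      ℙ {ω | (1 - q)⁻¹ * q ^ (∑' n : ℕ, (G n ω : ℝ)) = (1 - q)⁻¹ * q ^ (m : ℝ)}
        = ENNReal.ofReal (a ^ m * qPochInf a q / qPoch q q m) := by
  have haqn : ∀ n : ℕ, 0 ≤ a * q ^ n ∧ a * q ^ n < 1 := fun n =>
    ⟨mul_nonneg ha0 (pow_nonneg hq0.le n), by
      nlinarith [pow_le_one₀ hq0.le hq1.le (n := n), pow_nonneg hq0.le n]⟩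
  -- probability that `G n` is nonzero
  have hcompl : ∀ n : ℕ, ℙ ({ω : Ω | G n ω = 0}ᶜ) = ENNReal.ofReal (a * q ^ n) := by
    intro n
    have hms : MeasurableSet {ω : Ω | G n ω = 0} := (hmeas n) (measurableSet_singleton 0)
    rw [prob_compl_eq_one_sub hms, hdist n 0, pow_zero, mul_one, ← ENNReal.ofReal_one,
      ← ENNReal.ofReal_sub 1 (by linarith [(haqn n).2] : (0:ℝ) ≤ 1 - a * q ^ n)]
    congr 1
    ring
  -- tail bound
  have htail : ∀ N : ℕ, ∑' k : ℕ, ℙ ({ω : Ω | G (N + k) ω = 0}ᶜ)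
      = ENNReal.ofReal (a * q ^ N * (1 - q)⁻¹) := by
    intro N
    have hsummable : Summable (fun k : ℕ => a * q ^ (N + k)) := by
      have hh : (fun k : ℕ => a * q ^ (N + k)) = fun k => (a * q ^ N) * q ^ k := by
        funext k; rw [pow_add]; ring
      rw [hh]
      exact (summable_geometric_of_lt_one hq0.le hq1).mul_left _
    calc ∑' k : ℕ, ℙ ({ω : Ω | G (N + k) ω = 0}ᶜ)
        = ∑' k : ℕ, ENNReal.ofReal (a * q ^ (N + k)) := by
          exact tsum_congr fun k => hcompl (N + k)
      _ = ENNReal.ofReal (∑' k : ℕ, a * q ^ (N + k)) :=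
          (ENNReal.ofReal_tsum_of_nonneg (fun k => (haqn (N + k)).1) hsummable).symm
      _ = ENNReal.ofReal (a * q ^ N * (1 - q)⁻¹) := by
          congr 1
          have hh : ∀ k : ℕ, a * q ^ (N + k) = (a * q ^ N) * q ^ k := by
            intro k; rw [pow_add]; ring
          simp_rw [hh]
          rw [tsum_mul_left, tsum_geometric_of_lt_one hq0.le hq1]
  have hWsum : ∑' n : ℕ, ℙ ({ω : Ω | G n ω = 0}ᶜ) ≠ ⊤ := by
    have h := htail 0
    simp only [zero_add] at h
    rw [h]
    exact ENNReal.ofReal_ne_top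
  have hW : ∀ᵐ ω ∂(ℙ : Measure Ω), ∀ᶠ n in Filter.atTop, G n ω = 0 := by
    have h := ae_eventually_notMem (μ := (ℙ : Measure Ω)) hWsum
    filter_upwards [h] with ω hω
    filter_upwards [hω] with n hn
    simpa using hn
  -- part 1 : a.s. summability
  have hsummae : ∀ᵐ ω ∂(ℙ : Measure Ω), Summable (fun n => (G n ω : ℝ)) := by
    filter_upwards [hW] with ω hω
    obtain ⟨N, hN⟩ := Filter.eventually_atTop.mp hω
    refine summable_of_ne_finset_zero (s := Finset.range N) fun b hb => ?_
    have hbN : N ≤ b := by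
      have : ¬ b < N := by simpa [Finset.mem_range] using hb
      omega
    simp [hN b hbN]
  refine ⟨hsummae, fun m => ?_⟩
  -- the approximating events
  set E : ℕ → Set Ω := fun N =>
    {ω : Ω | ∑ n ∈ Finset.range N, G n ω = m} ∩ ⋂ k : ℕ, {ω : Ω | G (N + k) ω = 0} with hE
  have hmonoE : Monotone E := by
    refine monotone_nat_of_le_succ fun N => ?_
    rintro ω ⟨hs, ht⟩
    have htl : ∀ k, G (N + k) ω = 0 := fun k => Set.mem_iInter.mp ht k
    simp only [Set.mem_setOf_eq] at hs
    constructor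
    · show ∑ n ∈ Finset.range (N + 1), G n ω = m
      rw [Finset.sum_range_succ]
      have h0 : G N ω = 0 := by simpa using htl 0
      omega
    · refine Set.mem_iInter.mpr fun k => ?_
      show G (N + 1 + k) ω = 0
      have h := htl (1 + k)
      rwa [show N + (1 + k) = N + 1 + k by omega] at h
  -- measure of the tail complement is small
  have hTc_le : ∀ N : ℕ, ℙ ((⋂ k : ℕ, {ω : Ω | G (N + k) ω = 0})ᶜ)
      ≤ ENNReal.ofReal (a * q ^ N * (1 - q)⁻¹) := by
    intro N
    rw [Set.compl_iInter]
    exact (measure_iUnion_le _).trans (le_of_eq (htail N))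
  have hTc_tend : Filter.Tendsto (fun N => ℙ ((⋂ k : ℕ, {ω : Ω | G (N + k) ω = 0})ᶜ))
      Filter.atTop (nhds 0) := by
    have hub : Filter.Tendsto (fun N : ℕ => ENNReal.ofReal (a * q ^ N * (1 - q)⁻¹))
        Filter.atTop (nhds 0) := by
      rw [show (0 : ENNReal) = ENNReal.ofReal 0 from ENNReal.ofReal_zero.symm]
      apply ENNReal.tendsto_ofReal
      have h := ((tendsto_pow_atTop_nhds_zero_of_lt_one hq0.le hq1).const_mul a).mul_const
        ((1 - q)⁻¹)
      simpa using h
    exact tendsto_of_tendsto_of_tendsto_of_le_of_le tendsto_const_nhds hub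
      (fun N => zero_le) hTc_le
  -- convergence of ℙ(S_N = m)
  have hSdist := geom_partial_sum_dist hq0 hq1 ha0 ha1 G hmeas hindep hdist
  have hS_tend : Filter.Tendsto (fun N => ℙ {ω : Ω | ∑ n ∈ Finset.range N, G n ω = m})
      Filter.atTop (nhds (ENNReal.ofReal (a ^ m * qPochInf a q / qPoch q q m))) := by
    have heq : (fun N => ℙ {ω : Ω | ∑ n ∈ Finset.range N, G n ω = m})
        = fun N => ENNReal.ofReal (a ^ m * qPoch a q N * qPoch (q ^ N) q m / qPoch q q m) :=
      funext fun N => hSdist N m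
    rw [heq]
    apply ENNReal.tendsto_ofReal
    have h1 := tendsto_qPoch hq0 hq1 ha0 ha1
    have h2 : Filter.Tendsto (fun N : ℕ => qPoch (q ^ N) q m) Filter.atTop (nhds 1) := by
      have h2' : Filter.Tendsto (fun N : ℕ => ∏ j ∈ Finset.range m, (1 - q ^ N * q ^ j))
          Filter.atTop (nhds (∏ _j ∈ Finset.range m, (1 : ℝ))) := by
        refine tendsto_finset_prod _ fun j _ => ?_
        have hz : Filter.Tendsto (fun N : ℕ => q ^ N * q ^ j) Filter.atTop (nhds 0) := by
          simpa using (tendsto_pow_atTop_nhds_zero_of_lt_one hq0.le hq1).mul_const (q ^ j)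
        simpa using (tendsto_const_nhds (x := (1:ℝ))).sub hz
      simpa only [qPoch, Finset.prod_const_one] using h2'
    have h3 := (((tendsto_const_nhds (x := a ^ m)).mul h1).mul h2).div_const (qPoch q q m)
    simpa using h3
  -- limit of ℙ(E N)
  have hUtend : Filter.Tendsto (fun N => ℙ (E N)) Filter.atTop (nhds (ℙ (⋃ N, E N))) :=
    tendsto_measure_iUnion_atTop hmonoE
  have hle1 : ∀ N, ℙ (E N) ≤ ℙ {ω : Ω | ∑ n ∈ Finset.range N, G n ω = m} :=
    fun N => measure_mono Set.inter_subset_left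
  have hle2 : ∀ N, ℙ {ω : Ω | ∑ n ∈ Finset.range N, G n ω = m}
      ≤ ℙ (E N) + ℙ ((⋂ k : ℕ, {ω : Ω | G (N + k) ω = 0})ᶜ) := by
    intro N
    have hsub : {ω : Ω | ∑ n ∈ Finset.range N, G n ω = m}
        ⊆ E N ∪ (⋂ k : ℕ, {ω : Ω | G (N + k) ω = 0})ᶜ := by
      intro ω hω
      by_cases h : ω ∈ ⋂ k : ℕ, {ω : Ω | G (N + k) ω = 0}
      · exact Or.inl ⟨hω, h⟩
      · exact Or.inr h
    exact (measure_mono hsub).trans (measure_union_le _ _)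
  have hPU : ℙ (⋃ N, E N) = ENNReal.ofReal (a ^ m * qPochInf a q / qPoch q q m) := by
    refine le_antisymm (le_of_tendsto_of_tendsto' hUtend hS_tend hle1) ?_
    have hsum : Filter.Tendsto
        (fun N => ℙ (E N) + ℙ ((⋂ k : ℕ, {ω : Ω | G (N + k) ω = 0})ᶜ))
        Filter.atTop (nhds (ℙ (⋃ N, E N) + 0)) := hUtend.add hTc_tend
    rw [add_zero] at hsum
    exact le_of_tendsto_of_tendsto' hS_tend hsum hle2
  -- identify the target event with the union, up to a null set
  set V : Set Ω :=
    {ω : Ω | (1 - q)⁻¹ * q ^ (∑' n : ℕ, (G n ω : ℝ)) = (1 - q)⁻¹ * q ^ (m : ℝ)} with hV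
  have hUsubV : (⋃ N, E N) ⊆ V := by
    intro ω hω
    obtain ⟨N, hs, ht⟩ := Set.mem_iUnion.mp hω
    simp only [Set.mem_setOf_eq] at hs
    have htl : ∀ k, G (N + k) ω = 0 := fun k => Set.mem_iInter.mp ht k
    have hzero : ∀ b ∉ Finset.range N, ((G b ω : ℝ)) = 0 := by
      intro b hb
      have hbN : N ≤ b := by
        have : ¬ b < N := by simpa [Finset.mem_range] using hb
        omega
      have h := htl (b - N)
      rw [show N + (b - N) = b by omega] at h
      simp [h]
    have hts : ∑' n : ℕ, (G n ω : ℝ) = (m : ℝ) := by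
      rw [tsum_eq_sum hzero, ← Nat.cast_sum]
      exact_mod_cast hs
    show (1 - q)⁻¹ * q ^ (∑' n : ℕ, (G n ω : ℝ)) = (1 - q)⁻¹ * q ^ (m : ℝ)
    rw [hts]
  have hWc : ℙ ({ω : Ω | ∀ᶠ n in Filter.atTop, G n ω = 0}ᶜ) = 0 := by
    rw [Set.compl_setOf]
    exact ae_iff.mp hW
  have hVsub : V ⊆ (⋃ N, E N) ∪ {ω : Ω | ∀ᶠ n in Filter.atTop, G n ω = 0}ᶜ := by
    intro ω hVω
    by_cases hw : ω ∈ {ω : Ω | ∀ᶠ n in Filter.atTop, G n ω = 0}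
    · left
      obtain ⟨N, hN⟩ := Filter.eventually_atTop.mp hw
      have hzero : ∀ b ∉ Finset.range N, ((G b ω : ℝ)) = 0 := by
        intro b hb
        have hbN : N ≤ b := by
          have : ¬ b < N := by simpa [Finset.mem_range] using hb
          omega
        simp [hN b hbN]
      have hts : ∑' n : ℕ, (G n ω : ℝ) = ((∑ n ∈ Finset.range N, G n ω : ℕ) : ℝ) := by
        rw [tsum_eq_sum hzero, Nat.cast_sum]
      have hVω' : (1 - q)⁻¹ * q ^ (((∑ n ∈ Finset.range N, G n ω : ℕ) : ℝ))
          = (1 - q)⁻¹ * q ^ (m : ℝ) := by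
        rw [← hts]; exact hVω
      have hinv : ((1 : ℝ) - q)⁻¹ ≠ 0 := inv_ne_zero (by linarith)
      have heq := mul_left_cancel₀ hinv hVω'
      have hxm : ((∑ n ∈ Finset.range N, G n ω : ℕ) : ℝ) = (m : ℝ) :=
        le_antisymm ((Real.rpow_le_rpow_left_iff_of_base_lt_one hq0 hq1).mp heq.ge)
          ((Real.rpow_le_rpow_left_iff_of_base_lt_one hq0 hq1).mp heq.le)
      have hsum : ∑ n ∈ Finset.range N, G n ω = m := by exact_mod_cast hxm
      refine Set.mem_iUnion.mpr ⟨N, hsum, Set.mem_iInter.mpr fun k => ?_⟩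
      show G (N + k) ω = 0
      exact hN (N + k) (by omega)
    · exact Or.inr hw
  have hPV : ℙ V = ℙ (⋃ N, E N) := by
    refine le_antisymm ?_ (measure_mono hUsubV)
    calc ℙ V ≤ ℙ ((⋃ N, E N) ∪ {ω : Ω | ∀ᶠ n in Filter.atTop, G n ω = 0}ᶜ) :=
          measure_mono hVsub
      _ ≤ ℙ (⋃ N, E N) + ℙ ({ω : Ω | ∀ᶠ n in Filter.atTop, G n ω = 0}ᶜ) :=
          measure_union_le _ _
      _ = ℙ (⋃ N, E N) := by rw [hWc, add_zero]
  rw [hPV, hPU]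
end

section
/- q-binomial theorem: for complex x, z, q with |q| < 1 and |z| < 1, (xz;q)_∞ / (z;q)_∞ = Σ_{n=0}^∞ ((x;q)_n / (q;q)_n) z^n, where (a;q)_n = Π_{j=0}^{n-1}(1 - a q^j) and (a;q)_∞ = Π_{j=0}^∞ (1 - a q^j). -/
open Filter Topology

/-- The finite complex q-Pochhammer symbol `(a;q)_n = ∏_{j=0}^{n-1} (1 - a q^j)`. -/
noncomputable def qPochC (a q : ℂ) (n : ℕ) : ℂ := ∏ j ∈ Finset.range n, (1 - a * q ^ j)

/-- The infinite complex q-Pochhammer symbol `(a;q)_∞ = ∏_{j=0}^∞ (1 - a q^j)`. -/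
noncomputable def qPochInfC (a q : ℂ) : ℂ := ∏' j : ℕ, (1 - a * q ^ j)


lemma qb_summable_log (a q : ℂ) (hq : ‖q‖ < 1) :
    Summable fun j : ℕ => Complex.log (1 - a * q ^ j) := by
  have h0 : Tendsto (fun j : ℕ => ‖a‖ * ‖q‖ ^ j) atTop (𝓝 0) := by
    simpa using (tendsto_pow_atTop_nhds_zero_of_abs_lt_one
      (by rw [abs_of_nonneg (norm_nonneg q)]; exact hq)).const_mul ‖a‖
  obtain ⟨N, hN⟩ := (h0.eventually (eventually_le_nhds (by norm_num : (0:ℝ) < 1/2))).exists_forall_of_atTop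
  rw [← summable_nat_add_iff N]
  apply Summable.of_norm_bounded (g := fun j => 3/2 * (‖a‖ * ‖q‖ ^ (j + N)))
  · have : Summable fun j : ℕ => ‖q‖ ^ (j + N) := by
      exact (summable_geometric_of_lt_one (norm_nonneg q) hq).comp_injective
        (add_left_injective N)
    exact (this.mul_left ‖a‖).mul_left (3/2)
  · intro j
    have hb : ‖-(a * q ^ (j + N))‖ ≤ 1/2 := by
      rw [norm_neg, norm_mul, norm_pow]
      exact hN (j + N) (Nat.le_add_left N j)
    have := Complex.norm_log_one_add_half_le_self hb
    simpa [norm_mul, norm_pow, sub_eq_add_neg] using this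

lemma qb_hasProd (a q : ℂ) (hq : ‖q‖ < 1) :
    HasProd (fun j : ℕ => 1 - a * q ^ j) (qPochInfC a q) := by
  by_cases hzero : ∀ j : ℕ, 1 - a * q ^ j ≠ 0
  · exact (Complex.hasProd_of_hasSum_log (f := fun j : ℕ => 1 - a * q ^ j)
      (fun j => hzero j) (qb_summable_log a q hq).hasSum).multipliable.hasProd
  · push_neg at hzero
    obtain ⟨j₀, hj₀⟩ := hzero
    have hp : HasProd (fun j : ℕ => 1 - a * q ^ j) 0 := by
      rw [HasProd]
      apply Tendsto.congr' _ tendsto_const_nhds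
      filter_upwards [Filter.eventually_ge_atTop ({j₀} : Finset ℕ)] with s hs
      exact (Finset.prod_eq_zero (hs (Finset.mem_singleton_self j₀)) hj₀).symm
    rwa [qPochInfC, hp.tprod_eq]

lemma qb_ne_zero (a q : ℂ) (hq : ‖q‖ < 1) (hfac : ∀ j : ℕ, 1 - a * q ^ j ≠ 0) :
    qPochInfC a q ≠ 0 := by
  have := Complex.cexp_tsum_eq_tprod (f := fun j : ℕ => 1 - a * q ^ j)
    (fun j => hfac j) (qb_summable_log a q hq)
  rw [qPochInfC, ← this]
  exact Complex.exp_ne_zero _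

/-- The q-binomial theorem: for `|q| < 1` and `|z| < 1`,
`(xz;q)_∞ / (z;q)_∞ = ∑_{n=0}^∞ ((x;q)_n / (q;q)_n) z^n`. -/
theorem q_binomial_theorem
    (x z q : ℂ) (hq : ‖q‖ < 1) (hz : ‖z‖ < 1) :
    qPochInfC (x * z) q / qPochInfC z q
      = ∑' n : ℕ, (qPochC x q n / qPochC q q n) * z ^ n := by
  have hq' : ‖q‖ < 1 := hq
  have hz' : ‖z‖ < 1 := hz
  -- factors of (q;q)_n are nonzero
  have hfacq : ∀ j : ℕ, (1 : ℂ) - q * q ^ j ≠ 0 := by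
    intro j
    have : ‖q * q ^ j‖ < 1 := by
      rw [norm_mul, norm_pow]
      calc ‖q‖ * ‖q‖ ^ j ≤ ‖q‖ * 1 := by
            gcongr; exact pow_le_one₀ (norm_nonneg q) hq'.le
        _ < 1 := by simpa using hq'
    intro h
    rw [sub_eq_zero] at h
    rw [← h] at this
    simp at this
  have hPq : ∀ n : ℕ, qPochC q q n ≠ 0 := fun n =>
    Finset.prod_ne_zero_iff.2 fun j _ => hfacq j
  set c : ℕ → ℂ := fun n => qPochC x q n / qPochC q q n with hc
  have hc0 : c 0 = 1 := by simp [hc, qPochC]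
  -- recurrence
  have hrec : ∀ n : ℕ, (1 - q * q ^ n) * c (n + 1) = (1 - x * q ^ n) * c n := by
    intro n
    have hx : qPochC x q (n + 1) = qPochC x q n * (1 - x * q ^ n) :=
      Finset.prod_range_succ _ n
    have hq2 : qPochC q q (n + 1) = qPochC q q n * (1 - q * q ^ n) :=
      Finset.prod_range_succ _ n
    rw [hc]
    simp only
    rw [hx, hq2]
    field_simp [hPq n, hfacq n]
  -- summability of the norm series
  have hns : Summable fun n : ℕ => ‖c n‖ * ‖z‖ ^ n := by
    apply summable_of_ratio_norm_eventually_le (r := (1 + ‖z‖) / 2)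
      (by linarith)
    have hqn : Tendsto (fun n : ℕ => (q : ℂ) ^ n) atTop (𝓝 0) :=
      tendsto_pow_atTop_nhds_zero_of_norm_lt_one hq'
    have h1 : Tendsto (fun n : ℕ => ‖(1 : ℂ) - x * q ^ n‖) atTop (𝓝 1) := by
      have : Tendsto (fun n : ℕ => (1 : ℂ) - x * q ^ n) atTop (𝓝 1) := by
        simpa using ((hqn.const_mul x).const_sub 1)
      simpa using this.norm
    have h2 : Tendsto (fun n : ℕ => ‖(1 : ℂ) - q * q ^ n‖) atTop (𝓝 1) := by
      have : Tendsto (fun n : ℕ => (1 : ℂ) - q * q ^ n) atTop (𝓝 1) := by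
        simpa using ((hqn.const_mul q).const_sub 1)
      simpa using this.norm
    have hrat : Tendsto (fun n : ℕ => ‖z‖ * ‖(1 : ℂ) - x * q ^ n‖ / ‖(1 : ℂ) - q * q ^ n‖)
        atTop (𝓝 ‖z‖) := by
      have := ((h1.const_mul ‖z‖).div h2 (by norm_num)).congr (fun n => rfl)
      simpa [Pi.div_def] using this
    have hev : ∀ᶠ n : ℕ in atTop,
        ‖z‖ * ‖(1 : ℂ) - x * q ^ n‖ / ‖(1 : ℂ) - q * q ^ n‖ ≤ (1 + ‖z‖) / 2 := by
      apply hrat.eventually_le_const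
      linarith
    filter_upwards [hev] with n hn
    have hnorm : ‖(1 : ℂ) - q * q ^ n‖ * ‖c (n + 1)‖ = ‖(1 : ℂ) - x * q ^ n‖ * ‖c n‖ := by
      rw [← norm_mul, ← norm_mul, hrec n]
    have hpos : (0 : ℝ) < ‖(1 : ℂ) - q * q ^ n‖ := norm_pos_iff.2 (hfacq n)
    have key : ‖c (n + 1)‖ * ‖z‖ ^ (n + 1)
        = (‖z‖ * ‖(1 : ℂ) - x * q ^ n‖ / ‖(1 : ℂ) - q * q ^ n‖) * (‖c n‖ * ‖z‖ ^ n) := by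
      have hcc : ‖c (n + 1)‖ = ‖(1 : ℂ) - x * q ^ n‖ * ‖c n‖ / ‖(1 : ℂ) - q * q ^ n‖ := by
        rw [eq_div_iff hpos.ne']
        linear_combination hnorm
      rw [hcc, pow_succ]
      field_simp
    rw [Real.norm_of_nonneg (by positivity), Real.norm_of_nonneg (by positivity), key]
    have hnn : (0 : ℝ) ≤ ‖c n‖ * ‖z‖ ^ n := by positivity
    exact mul_le_mul_of_nonneg_right hn hnn
  have hsum : ∀ w : ℂ, ‖w‖ ≤ ‖z‖ → Summable (fun n : ℕ => c n * w ^ n) := by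
    intro w hw
    apply Summable.of_norm_bounded hns
    intro n
    rw [norm_mul, norm_pow]
    gcongr
  -- the functional equation
  have hfe : ∀ w : ℂ, ‖w‖ ≤ ‖z‖ → (1 - w) * (∑' n : ℕ, c n * w ^ n) = (1 - x * w) * ∑' n : ℕ, c n * (q * w) ^ n := by
    intro w hw
    have hqw : ‖q * w‖ ≤ ‖z‖ := by
      rw [norm_mul]
      calc ‖q‖ * ‖w‖ ≤ 1 * ‖z‖ := by
            apply mul_le_mul hq'.le hw (norm_nonneg w) zero_le_one
        _ = ‖z‖ := one_mul _
    have h1 := hsum w hw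
    have h2 := hsum (q * w) hqw
    have h1' : Summable (fun n : ℕ => c (n + 1) * w ^ (n + 1)) :=
      (summable_nat_add_iff (f := fun n : ℕ => c n * w ^ n) 1).2 h1
    have h2' : Summable (fun n : ℕ => c (n + 1) * (q * w) ^ (n + 1)) :=
      (summable_nat_add_iff (f := fun n : ℕ => c n * (q * w) ^ n) 1).2 h2
    have e1 : (∑' n : ℕ, c n * w ^ n) = 1 + ∑' n : ℕ, c (n + 1) * w ^ (n + 1) := by
      rw [Summable.tsum_eq_zero_add h1, hc0]
      simp
    have e2 : (∑' n : ℕ, c n * (q * w) ^ n) = 1 + ∑' n : ℕ, c (n + 1) * (q * w) ^ (n + 1) := by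
      rw [Summable.tsum_eq_zero_add h2, hc0]
      simp
    have ew : w * (∑' n : ℕ, c n * w ^ n) = ∑' n : ℕ, c n * w ^ (n + 1) := by
      rw [← tsum_mul_left]
      congr 1
      funext n
      ring
    have eqw : (x * w) * (∑' n : ℕ, c n * (q * w) ^ n) = ∑' n : ℕ, x * c n * q ^ n * w ^ (n + 1) := by
      rw [← tsum_mul_left]
      congr 1
      funext n
      rw [mul_pow]
      ring
    have hsub : (∑' n : ℕ, c (n + 1) * w ^ (n + 1)) - ∑' n : ℕ, c n * w ^ (n + 1)
        = (∑' n : ℕ, c (n + 1) * (q * w) ^ (n + 1)) - ∑' n : ℕ, x * c n * q ^ n * w ^ (n + 1) := by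
      have hA : Summable (fun n : ℕ => c n * w ^ (n + 1)) := by
        have := h1.mul_left w
        apply this.congr
        intro n
        ring
      have hB : Summable (fun n : ℕ => x * c n * q ^ n * w ^ (n + 1)) := by
        have := h2.mul_left (x * w)
        apply this.congr
        intro n
        rw [mul_pow]
        ring
      rw [← Summable.tsum_sub h1' hA, ← Summable.tsum_sub h2' hB]
      apply tsum_congr
      intro n
      have := hrec n
      have hqpow : q * q ^ n = q ^ (n + 1) := (pow_succ' q n).symm
      rw [hqpow] at this
      rw [mul_pow]
      linear_combination (w ^ (n + 1)) * this
    calc (1 - w) * (∑' n : ℕ, c n * w ^ n)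
        = (∑' n : ℕ, c n * w ^ n) - w * (∑' n : ℕ, c n * w ^ n) := by ring
      _ = (1 + ∑' n : ℕ, c (n + 1) * w ^ (n + 1)) - ∑' n : ℕ, c n * w ^ (n + 1) := by
          rw [← e1, ← ew]
      _ = (1 + ∑' n : ℕ, c (n + 1) * (q * w) ^ (n + 1)) - ∑' n : ℕ, x * c n * q ^ n * w ^ (n + 1) := by
          rw [add_sub_assoc, add_sub_assoc, hsub]
      _ = (∑' n : ℕ, c n * (q * w) ^ n) - (x * w) * (∑' n : ℕ, c n * (q * w) ^ n) := by
          rw [← e2, ← eqw]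
      _ = (1 - x * w) * ∑' n : ℕ, c n * (q * w) ^ n := by ring
  -- iteration
  have hqNz : ∀ N : ℕ, ‖q ^ N * z‖ ≤ ‖z‖ := by
    intro N
    rw [norm_mul, norm_pow]
    calc ‖q‖ ^ N * ‖z‖ ≤ 1 * ‖z‖ := by
          apply mul_le_mul_of_nonneg_right (pow_le_one₀ (norm_nonneg q) hq'.le) (norm_nonneg z)
      _ = ‖z‖ := one_mul _
  have hiter : ∀ N : ℕ,
      qPochC z q N * (∑' n : ℕ, c n * z ^ n)
        = qPochC (x * z) q N * ∑' n : ℕ, c n * (q ^ N * z) ^ n := by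
    intro N
    induction N with
    | zero => simp [qPochC]
    | succ N ih =>
      have hstep := hfe (q ^ N * z) (hqNz N)
      rw [qPochC, qPochC, Finset.prod_range_succ, Finset.prod_range_succ]
      have e1 : (1 : ℂ) - z * q ^ N = 1 - q ^ N * z := by ring
      have e2 : (1 : ℂ) - x * z * q ^ N = 1 - x * (q ^ N * z) := by ring
      have e3 : q * (q ^ N * z) = q ^ (N + 1) * z := by ring
      rw [e3] at hstep
      calc (∏ j ∈ Finset.range N, (1 - z * q ^ j)) * (1 - z * q ^ N) * ∑' n : ℕ, c n * z ^ n
          = (1 - q ^ N * z) * ((∏ j ∈ Finset.range N, (1 - z * q ^ j)) * ∑' n : ℕ, c n * z ^ n) := by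
            rw [e1]; ring
        _ = (1 - q ^ N * z) * ((∏ j ∈ Finset.range N, (1 - x * z * q ^ j)) * ∑' n : ℕ, c n * (q ^ N * z) ^ n) := by
            rw [show (∏ j ∈ Finset.range N, (1 - z * q ^ j)) * ∑' n : ℕ, c n * z ^ n
                = (∏ j ∈ Finset.range N, (1 - x * z * q ^ j)) * ∑' n : ℕ, c n * (q ^ N * z) ^ n from ih]
        _ = (∏ j ∈ Finset.range N, (1 - x * z * q ^ j)) * ((1 - q ^ N * z) * ∑' n : ℕ, c n * (q ^ N * z) ^ n) := by
            ring
        _ = (∏ j ∈ Finset.range N, (1 - x * z * q ^ j)) * ((1 - x * (q ^ N * z)) * ∑' n : ℕ, c n * (q ^ (N + 1) * z) ^ n) := by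
            rw [hstep]
        _ = (∏ j ∈ Finset.range N, (1 - x * z * q ^ j)) * (1 - x * z * q ^ N) * ∑' n : ℕ, c n * (q ^ (N + 1) * z) ^ n := by
            rw [← e2]; ring
  -- limit of the series factor
  have hMsum : Summable (fun n : ℕ => ‖c (n + 1)‖ * ‖z‖ ^ (n + 1)) :=
    (summable_nat_add_iff (f := fun n : ℕ => ‖c n‖ * ‖z‖ ^ n) 1).2 hns
  set M : ℝ := ∑' n : ℕ, ‖c (n + 1)‖ * ‖z‖ ^ (n + 1) with hM
  have htendS : Tendsto (fun N : ℕ => ∑' n : ℕ, c n * (q ^ N * z) ^ n) atTop (𝓝 1) := by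
    rw [tendsto_iff_norm_sub_tendsto_zero]
    have hbound : ∀ N : ℕ, ‖(∑' n : ℕ, c n * (q ^ N * z) ^ n) - 1‖ ≤ M * ‖q‖ ^ N := by
      intro N
      have hsumN := hsum (q ^ N * z) (hqNz N)
      have hsumN' : Summable (fun n : ℕ => c (n + 1) * (q ^ N * z) ^ (n + 1)) :=
        (summable_nat_add_iff (f := fun n : ℕ => c n * (q ^ N * z) ^ n) 1).2 hsumN
      have e1 : (∑' n : ℕ, c n * (q ^ N * z) ^ n) - 1
          = ∑' n : ℕ, c (n + 1) * (q ^ N * z) ^ (n + 1) := by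
        rw [Summable.tsum_eq_zero_add hsumN, hc0]
        simp
      rw [e1]
      have hterm : ∀ n : ℕ, ‖c (n + 1) * (q ^ N * z) ^ (n + 1)‖
          ≤ ‖q‖ ^ N * (‖c (n + 1)‖ * ‖z‖ ^ (n + 1)) := by
        intro n
        rw [norm_mul, mul_pow, norm_mul, norm_pow, norm_pow, norm_pow]
        have h1 : (‖q‖ ^ N) ^ (n + 1) ≤ ‖q‖ ^ N := by
          apply pow_le_of_le_one (by positivity)
            (pow_le_one₀ (norm_nonneg q) hq'.le) (Nat.succ_ne_zero n)
        calc ‖c (n + 1)‖ * ((‖q‖ ^ N) ^ (n + 1) * ‖z‖ ^ (n + 1))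
            ≤ ‖c (n + 1)‖ * (‖q‖ ^ N * ‖z‖ ^ (n + 1)) := by
              apply mul_le_mul_of_nonneg_left _ (norm_nonneg _)
              exact mul_le_mul_of_nonneg_right h1 (by positivity)
          _ = ‖q‖ ^ N * (‖c (n + 1)‖ * ‖z‖ ^ (n + 1)) := by ring
      calc ‖∑' n : ℕ, c (n + 1) * (q ^ N * z) ^ (n + 1)‖
          ≤ ∑' n : ℕ, ‖c (n + 1) * (q ^ N * z) ^ (n + 1)‖ := by
            apply norm_tsum_le_tsum_norm hsumN'.norm
        _ ≤ ∑' n : ℕ, ‖q‖ ^ N * (‖c (n + 1)‖ * ‖z‖ ^ (n + 1)) := by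
            apply Summable.tsum_le_tsum hterm hsumN'.norm (hMsum.mul_left _)
        _ = ‖q‖ ^ N * M := by rw [tsum_mul_left]
        _ = M * ‖q‖ ^ N := by ring
    have hlim : Tendsto (fun N : ℕ => M * ‖q‖ ^ N) atTop (𝓝 0) := by
      simpa using (tendsto_pow_atTop_nhds_zero_of_abs_lt_one
        (by rw [abs_of_nonneg (norm_nonneg q)]; exact hq')).const_mul M
    apply squeeze_zero (fun N => norm_nonneg _) hbound hlim
  -- limits of the partial products
  have hprod1 : Tendsto (fun N : ℕ => qPochC z q N) atTop (𝓝 (qPochInfC z q)) :=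
    (qb_hasProd z q hq').tendsto_prod_nat
  have hprod2 : Tendsto (fun N : ℕ => qPochC (x * z) q N) atTop (𝓝 (qPochInfC (x * z) q)) :=
    (qb_hasProd (x * z) q hq').tendsto_prod_nat
  have hL : Tendsto (fun N : ℕ => qPochC z q N * ∑' n : ℕ, c n * z ^ n) atTop
      (𝓝 (qPochInfC z q * ∑' n : ℕ, c n * z ^ n)) :=
    hprod1.mul_const _
  have hR : Tendsto (fun N : ℕ => qPochC (x * z) q N * ∑' n : ℕ, c n * (q ^ N * z) ^ n) atTop
      (𝓝 (qPochInfC (x * z) q * 1)) :=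
    hprod2.mul htendS
  have hmain : qPochInfC z q * (∑' n : ℕ, c n * z ^ n) = qPochInfC (x * z) q * 1 :=
    tendsto_nhds_unique (hL.congr (fun N => hiter N)) hR
  -- denominator nonzero
  have hfacz : ∀ j : ℕ, (1 : ℂ) - z * q ^ j ≠ 0 := by
    intro j
    have : ‖z * q ^ j‖ < 1 := by
      rw [norm_mul, norm_pow]
      calc ‖z‖ * ‖q‖ ^ j ≤ ‖z‖ * 1 := by
            gcongr
            exact pow_le_one₀ (norm_nonneg q) hq'.le
        _ < 1 := by simpa using hz'
    intro h
    rw [sub_eq_zero] at h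
    rw [← h] at this
    simp at this
  have hdz : qPochInfC z q ≠ 0 := qb_ne_zero z q hq' hfacz
  rw [mul_one] at hmain
  rw [← hmain, mul_comm, mul_div_assoc, div_self hdz, mul_one]
end

section
/- Euler's identity for the q-exponential: for 0 < q < 1 and s complex, (s;q)_∞ = Σ_{n=0}^∞ ((-1)^n q^{n(n-1)/2} / (q;q)_n) s^n, where (s;q)_∞ = Π_{j=0}^∞ (1 - s q^j). -/
open Finset Filter Topology

/-- Auxiliary: the real q-Pochhammer `(q;q)_n = ∏_{j=1}^n (1-q^j)`. -/
noncomputable def Pq (q : ℝ) (n : ℕ) : ℝ := ∏ j ∈ Finset.range n, (1 - q ^ (j + 1))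

lemma Pq_pos {q : ℝ} (hq0 : 0 < q) (hq1 : q < 1) (n : ℕ) : 0 < Pq q n := by
  apply Finset.prod_pos
  intro j _
  have : q ^ (j + 1) < 1 := pow_lt_one₀ hq0.le hq1 (Nat.succ_ne_zero j)
  linarith

lemma Pq_succ (q : ℝ) (n : ℕ) : Pq q (n + 1) = Pq q n * (1 - q ^ (n + 1)) :=
  Finset.prod_range_succ _ _

lemma Pq_zero (q : ℝ) : Pq q 0 = 1 := Finset.prod_range_zero _

lemma Pq_le_one {q : ℝ} (hq0 : 0 < q) (hq1 : q < 1) (n : ℕ) : Pq q n ≤ 1 := by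
  apply Finset.prod_le_one
  · intro j _
    have : q ^ (j + 1) < 1 := pow_lt_one₀ hq0.le hq1 (Nat.succ_ne_zero j)
    linarith
  · intro j _
    have : 0 < q ^ (j + 1) := pow_pos hq0 _
    linarith

lemma Pq_anti {q : ℝ} (hq0 : 0 < q) (hq1 : q < 1) {m n : ℕ} (h : m ≤ n) :
    Pq q n ≤ Pq q m := by
  obtain ⟨d, rfl⟩ := Nat.exists_eq_add_of_le h
  rw [Pq, Finset.prod_range_add]
  have h1 : (∏ i ∈ Finset.range d, (1 - q ^ (m + i + 1))) ≤ 1 := by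
    apply Finset.prod_le_one
    · intro j _
      have : q ^ (m + j + 1) < 1 := pow_lt_one₀ hq0.le hq1 (Nat.succ_ne_zero _)
      linarith
    · intro j _
      have : 0 < q ^ (m + j + 1) := pow_pos hq0 _
      linarith
  have h2 : 0 < Pq q m := Pq_pos hq0 hq1 m
  calc Pq q m * ∏ i ∈ Finset.range d, (1 - q ^ (m + i + 1)) ≤ Pq q m * 1 := by
        apply mul_le_mul_of_nonneg_left h1 h2.le
    _ = Pq q m := mul_one _

lemma Pq_ge {q : ℝ} (hq0 : 0 < q) (hq1 : q < 1) (n : ℕ) : (1 - q) ^ n ≤ Pq q n := by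
  have h : (1 - q) ^ n = ∏ _j ∈ Finset.range n, (1 - q) := by
    rw [Finset.prod_const, Finset.card_range]
  rw [h, Pq]
  apply Finset.prod_le_prod
  · intro j _; linarith
  · intro j _
    have : q ^ (j + 1) ≤ q ^ 1 := pow_le_pow_of_le_one hq0.le hq1.le (by omega)
    simpa using by linarith [this]

lemma qPochC_eq (q : ℝ) (n : ℕ) : qPochC (q : ℂ) (q : ℂ) n = ((Pq q n : ℝ) : ℂ) := by
  rw [qPochC, Pq]
  push_cast
  apply Finset.prod_congr rfl
  intro j _
  ring

/-- The coefficients in the finite q-binomial theorem. -/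
noncomputable def qcc (q : ℝ) (n k : ℕ) : ℂ :=
  if k ≤ n then
    (-1) ^ k * (q : ℂ) ^ (k.choose 2) * ((Pq q n / (Pq q k * Pq q (n - k)) : ℝ) : ℂ)
  else 0

lemma choose_two_succ (k : ℕ) : (k + 1).choose 2 = k.choose 2 + k := by
  rw [show (2 : ℕ) = 1 + 1 from rfl, Nat.choose_succ_succ, Nat.choose_one_right, Nat.add_comm]

lemma qcc_zero {q : ℝ} (hq0 : 0 < q) (hq1 : q < 1) (n : ℕ) : qcc q n 0 = 1 := by
  have h := (Pq_pos hq0 hq1 n).ne'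
  simp [qcc, Pq_zero, div_self h]

lemma qcc_rec {q : ℝ} (hq0 : 0 < q) (hq1 : q < 1) (n k : ℕ) :
    qcc q (n + 1) (k + 1) = qcc q n (k + 1) - (q : ℂ) ^ n * qcc q n k := by
  have hP : ∀ m, (0 : ℝ) < Pq q m := Pq_pos hq0 hq1
  rcases lt_trichotomy k n with h | rfl | h
  · -- k + 1 ≤ n
    obtain ⟨m, rfl⟩ : ∃ m, n = m + (k + 1) := ⟨n - (k + 1), by omega⟩
    have e1 : m + (k + 1) + 1 - (k + 1) = m + 1 := by omega
    have e2 : m + (k + 1) - (k + 1) = m := by omega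
    have e3 : m + (k + 1) - k = m + 1 := by omega
    rw [qcc, qcc, qcc, if_pos (by omega), if_pos (by omega), if_pos (by omega), e1, e2, e3]
    have hkey : Pq q (m + (k + 1) + 1) / (Pq q (k + 1) * Pq q (m + 1))
        = Pq q (m + (k + 1)) / (Pq q (k + 1) * Pq q m)
          + q ^ (m + 1) * (Pq q (m + (k + 1)) / (Pq q k * Pq q (m + 1))) := by
      have h1 : Pq q (m + (k + 1) + 1) = Pq q (m + (k + 1)) * (1 - q ^ (m + (k + 1) + 1)) :=
        Pq_succ q _
      have h2 : Pq q (m + 1) = Pq q m * (1 - q ^ (m + 1)) := Pq_succ q m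
      have h3 : Pq q (k + 1) = Pq q k * (1 - q ^ (k + 1)) := Pq_succ q k
      have hm := (hP m).ne'
      have hk := (hP k).ne'
      have hmk := (hP (m + (k + 1))).ne'
      have hq2 : (1 : ℝ) - q ^ (m + 1) ≠ 0 := by
        have : q ^ (m + 1) < 1 := pow_lt_one₀ hq0.le hq1 (Nat.succ_ne_zero _)
        linarith
      have hq3 : (1 : ℝ) - q ^ (k + 1) ≠ 0 := by
        have : q ^ (k + 1) < 1 := pow_lt_one₀ hq0.le hq1 (Nat.succ_ne_zero _)
        linarith
      rw [h1, h2, h3]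
      field_simp
      ring
    rw [hkey]
    push_cast
    rw [choose_two_succ]
    ring
  · -- k = n
    rw [qcc, qcc, qcc, if_pos (le_refl _), if_neg (by omega), if_pos (le_refl _)]
    have e1 : k + 1 - (k + 1) = 0 := by omega
    have e2 : k - k = 0 := by omega
    rw [e1, e2, Pq_zero]
    have h1 : Pq q (k + 1) / (Pq q (k + 1) * 1) = 1 := by
      rw [mul_one, div_self (hP (k + 1)).ne']
    have h2 : Pq q k / (Pq q k * 1) = 1 := by
      rw [mul_one, div_self (hP k).ne']
    rw [h1, h2, choose_two_succ]
    push_cast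
    ring
  · rw [qcc, qcc, qcc, if_neg (by omega), if_neg (by omega), if_neg (by omega)]
    ring

/-- The finite q-binomial theorem. -/
lemma qbinom {q : ℝ} (hq0 : 0 < q) (hq1 : q < 1) (s : ℂ) (n : ℕ) :
    ∏ j ∈ Finset.range n, (1 - s * (q : ℂ) ^ j)
      = ∑ k ∈ Finset.range (n + 1), qcc q n k * s ^ k := by
  induction n with
  | zero => simp [qcc, Pq_zero]
  | succ n ih =>
    rw [Finset.prod_range_succ, ih,
      Finset.sum_range_succ' (fun k => qcc q (n + 1) k * s ^ k) (n + 1)]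
    simp only [qcc_rec hq0 hq1, pow_zero, mul_one, qcc_zero hq0 hq1]
    have hsplit : ∑ i ∈ Finset.range (n + 1),
          (qcc q n (i + 1) - (q : ℂ) ^ n * qcc q n i) * s ^ (i + 1)
        = (∑ i ∈ Finset.range (n + 1), qcc q n (i + 1) * s ^ (i + 1))
          - (q : ℂ) ^ n * s * ∑ i ∈ Finset.range (n + 1), qcc q n i * s ^ i := by
      rw [Finset.mul_sum, ← Finset.sum_sub_distrib]
      apply Finset.sum_congr rfl
      intro i _
      ring
    rw [hsplit]
    have htop : (∑ i ∈ Finset.range (n + 1), qcc q n (i + 1) * s ^ (i + 1)) + 1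
        = ∑ k ∈ Finset.range (n + 1), qcc q n k * s ^ k := by
      have := Finset.sum_range_succ' (fun k => qcc q n k * s ^ k) (n + 1)
      rw [Finset.sum_range_succ] at this
      have hz : qcc q n (n + 1) = 0 := by rw [qcc, if_neg (by omega)]
      rw [hz, zero_mul, add_zero, qcc_zero hq0 hq1, pow_zero, mul_one] at this
      exact this.symm
    calc (∑ k ∈ Finset.range (n + 1), qcc q n k * s ^ k) * (1 - s * (q : ℂ) ^ n)
        = ((∑ i ∈ Finset.range (n + 1), qcc q n (i + 1) * s ^ (i + 1)) + 1)
            - (q : ℂ) ^ n * s * ∑ i ∈ Finset.range (n + 1), qcc q n i * s ^ i := by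
          rw [htop]; ring
      _ = _ := by ring

lemma bsummable {q M : ℝ} (hq0 : 0 < q) (hq1 : q < 1) (hM : 0 < M) :
    Summable (fun k : ℕ => q ^ (k.choose 2) * M ^ k) := by
  apply summable_of_ratio_test_tendsto_lt_one (l := 0) one_pos
  · filter_upwards with k
    positivity
  · have hrw : ∀ k : ℕ, ‖q ^ ((k + 1).choose 2) * M ^ (k + 1)‖ / ‖q ^ (k.choose 2) * M ^ k‖
        = q ^ k * M := by
      intro k
      have h1 : (0 : ℝ) < q ^ (k.choose 2) * M ^ k := by positivity
      have h2 : (0 : ℝ) < q ^ ((k + 1).choose 2) * M ^ (k + 1) := by positivity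
      rw [Real.norm_eq_abs, Real.norm_eq_abs, abs_of_pos h1, abs_of_pos h2,
        choose_two_succ, pow_add, pow_succ]
      field_simp
    simp only [hrw]
    have := (tendsto_pow_atTop_nhds_zero_of_lt_one hq0.le hq1).mul_const M
    simpa using this

lemma qcc_bound {q : ℝ} (hq0 : 0 < q) (hq1 : q < 1) (s : ℂ) (n k : ℕ) :
    ‖qcc q n k * s ^ k‖ ≤ q ^ (k.choose 2) * ((‖s‖ + 1) / (1 - q)) ^ k := by
  by_cases h : k ≤ n
  · rw [qcc, if_pos h]
    have hX : (0 : ℝ) < Pq q n / (Pq q k * Pq q (n - k)) := by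
      have := Pq_pos hq0 hq1 n; have := Pq_pos hq0 hq1 k; have := Pq_pos hq0 hq1 (n - k)
      positivity
    have hnorm : ‖(-1 : ℂ) ^ k * (q : ℂ) ^ (k.choose 2)
        * ((Pq q n / (Pq q k * Pq q (n - k)) : ℝ) : ℂ) * s ^ k‖
        = q ^ (k.choose 2) * (Pq q n / (Pq q k * Pq q (n - k))) * ‖s‖ ^ k := by
      rw [norm_mul, norm_mul, norm_mul, norm_pow, norm_pow, norm_pow, norm_neg, norm_one,
        one_pow, one_mul, Complex.norm_real, Complex.norm_real, Real.norm_eq_abs,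
        Real.norm_eq_abs, abs_of_pos hq0, abs_of_pos hX]
    rw [hnorm]
    have hq' : (0 : ℝ) < 1 - q := by linarith
    have hX2 : Pq q n / (Pq q k * Pq q (n - k)) ≤ (1 / (1 - q)) ^ k := by
      have h1 : Pq q n ≤ Pq q (n - k) := Pq_anti hq0 hq1 (Nat.sub_le n k)
      have h2 : (1 - q) ^ k ≤ Pq q k := Pq_ge hq0 hq1 k
      have hk := Pq_pos hq0 hq1 k
      have hnk := Pq_pos hq0 hq1 (n - k)
      have step1 : Pq q n / (Pq q k * Pq q (n - k)) ≤ 1 / Pq q k := by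
        rw [div_le_div_iff₀ (by positivity) hk]
        calc Pq q n * Pq q k ≤ Pq q (n - k) * Pq q k := by
              apply mul_le_mul_of_nonneg_right h1 hk.le
          _ = 1 * (Pq q k * Pq q (n - k)) := by ring
      refine step1.trans ?_
      rw [one_div, div_pow, one_pow, one_div]
      apply inv_anti₀ (by positivity) h2
    calc q ^ (k.choose 2) * (Pq q n / (Pq q k * Pq q (n - k))) * ‖s‖ ^ k
        ≤ q ^ (k.choose 2) * (1 / (1 - q)) ^ k * (‖s‖ + 1) ^ k := by
          apply mul_le_mul
          · apply mul_le_mul_of_nonneg_left hX2 (by positivity)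
          · apply pow_le_pow_left₀ (norm_nonneg s); linarith
          · positivity
          · positivity
      _ = q ^ (k.choose 2) * ((‖s‖ + 1) / (1 - q)) ^ k := by
          rw [div_pow, div_pow]
          ring
  · rw [qcc, if_neg h, zero_mul, norm_zero]
    have hq' : (0 : ℝ) < 1 - q := by linarith
    positivity

lemma ratio_tendsto {q : ℝ} (hq0 : 0 < q) (hq1 : q < 1) (k : ℕ) :
    Tendsto (fun n : ℕ => Pq q n / Pq q (n - k)) atTop (𝓝 1) := by
  have hlim : Tendsto (fun n : ℕ => ∏ i ∈ Finset.range k, (1 - q ^ (n - k + (i + 1))))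
      atTop (𝓝 (∏ _i ∈ Finset.range k, (1 : ℝ))) := by
    apply tendsto_finset_prod
    intro i _
    have h1 : Tendsto (fun n : ℕ => q ^ (n - k) * q ^ (i + 1)) atTop (𝓝 (0 * q ^ (i + 1))) :=
      (((tendsto_pow_atTop_nhds_zero_of_lt_one hq0.le hq1).comp
        (tendsto_sub_atTop_nat k))).mul_const _
    rw [zero_mul] at h1
    have h2 : Tendsto (fun n : ℕ => 1 - q ^ (n - k + (i + 1))) atTop (𝓝 (1 - 0)) := by
      apply Tendsto.const_sub
      convert h1 using 2 with n
      rw [pow_add]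
    simpa using h2
  rw [Finset.prod_const_one] at hlim
  apply Tendsto.congr' _ hlim
  filter_upwards [eventually_ge_atTop k] with n hn
  have hnk : n - k + k = n := Nat.sub_add_cancel hn
  have : Pq q n = Pq q (n - k) * ∏ i ∈ Finset.range k, (1 - q ^ (n - k + (i + 1))) := by
    conv_lhs => rw [← hnk]
    rw [Pq, Finset.prod_range_add]
    rfl
  rw [this, mul_div_cancel_left₀ _ (Pq_pos hq0 hq1 (n - k)).ne']

lemma mult_aux {q : ℝ} (hq0 : 0 < q) (hq1 : q < 1) (s : ℂ) :
    Multipliable (fun j : ℕ => 1 - s * (q : ℂ) ^ j) := by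
  by_cases hz : ∀ j : ℕ, 1 - s * (q : ℂ) ^ j ≠ 0
  · -- all factors nonzero: use log summability
    have hnorm : ∀ j : ℕ, ‖s * (q : ℂ) ^ j‖ = ‖s‖ * q ^ j := by
      intro j
      rw [norm_mul, norm_pow, Complex.norm_real, Real.norm_eq_abs, abs_of_pos hq0]
    have htend : Tendsto (fun j : ℕ => ‖s‖ * q ^ j) atTop (𝓝 0) := by
      have := (tendsto_pow_atTop_nhds_zero_of_lt_one hq0.le hq1).const_mul ‖s‖
      simpa using this
    obtain ⟨N, hN⟩ : ∃ N : ℕ, ∀ j ≥ N, ‖s‖ * q ^ j ≤ 1 / 2 := by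
      have := htend.eventually (eventually_le_nhds (show (0:ℝ) < 1/2 by norm_num))
      exact eventually_atTop.1 this
    have hsum : Summable (fun j : ℕ => Complex.log (1 - s * (q : ℂ) ^ j)) := by
      rw [← summable_nat_add_iff N]
      apply Summable.of_norm_bounded (g := fun j : ℕ => 3 / 2 * (‖s‖ * q ^ N) * q ^ j)
      · exact (summable_geometric_of_lt_one hq0.le hq1).mul_left _
      · intro j
        have h1 : ‖-(s * (q : ℂ) ^ (j + N))‖ ≤ 1 / 2 := by
          rw [norm_neg, hnorm]
          exact hN (j + N) (by omega)
        have h2 := Complex.norm_log_one_add_half_le_self h1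
        have h3 : (1 : ℂ) + -(s * (q : ℂ) ^ (j + N)) = 1 - s * (q : ℂ) ^ (j + N) := by ring
        rw [h3, norm_neg, hnorm] at h2
        calc ‖Complex.log (1 - s * (q : ℂ) ^ (j + N))‖ ≤ 3 / 2 * (‖s‖ * q ^ (j + N)) := h2
          _ = 3 / 2 * (‖s‖ * q ^ N) * q ^ j := by rw [pow_add]; ring
    exact Complex.multipliable_of_summable_log hsum
  · push_neg at hz
    obtain ⟨j0, hj0⟩ := hz
    refine ⟨0, ?_⟩
    have hev : ∀ᶠ S : Finset ℕ in atTop, ∏ j ∈ S, (1 - s * (q : ℂ) ^ j) = 0 := by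
      rw [eventually_atTop]
      exact ⟨{j0}, fun S hS => Finset.prod_eq_zero (hS (Finset.mem_singleton_self j0)) hj0⟩
    exact Tendsto.congr' (by filter_upwards [hev] with S hS using hS.symm) tendsto_const_nhds

/-- Euler's identity for the q-exponential: for `0 < q < 1` and `s ∈ ℂ`,
`(s;q)_∞ = ∑_{n=0}^∞ (-1)^n q^{n(n-1)/2} s^n / (q;q)_n`. -/
theorem euler_q_exponential
    (q : ℝ) (hq0 : 0 < q) (hq1 : q < 1) (s : ℂ) :
    qPochInfC s (q : ℂ)
      = ∑' n : ℕ, ((-1) ^ n * (q : ℂ) ^ (n.choose 2) / qPochC (q : ℂ) (q : ℂ) n) * s ^ n := by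
  have hq' : (0 : ℝ) < 1 - q := by linarith
  -- pointwise limits of the coefficients
  have hpt : ∀ k : ℕ, Tendsto (fun n : ℕ => qcc q n k * s ^ k) atTop
      (𝓝 (((-1) ^ k * (q : ℂ) ^ (k.choose 2) / qPochC (q : ℂ) (q : ℂ) k) * s ^ k)) := by
    intro k
    have h1 := ratio_tendsto hq0 hq1 k
    have h2 : Tendsto (fun n : ℕ => (Pq q n / (Pq q k * Pq q (n - k)) : ℝ)) atTop
        (𝓝 ((Pq q k)⁻¹)) := by
      have h3 := h1.mul_const (Pq q k)⁻¹
      rw [one_mul] at h3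
      apply Tendsto.congr _ h3
      intro n
      have hk := (Pq_pos hq0 hq1 k).ne'
      have hnk := (Pq_pos hq0 hq1 (n - k)).ne'
      rw [div_mul_eq_mul_div, ← div_eq_mul_inv, div_right_comm, div_div,
        mul_comm (Pq q (n - k)) (Pq q k)]
    have h4 : Tendsto (fun n : ℕ => ((Pq q n / (Pq q k * Pq q (n - k)) : ℝ) : ℂ)) atTop
        (𝓝 (((Pq q k)⁻¹ : ℝ) : ℂ)) := by
      exact (Complex.continuous_ofReal.tendsto _).comp h2
    have h5 := (h4.const_mul ((-1 : ℂ) ^ k * (q : ℂ) ^ (k.choose 2))).mul_const (s ^ k)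
    have hval : ((-1 : ℂ) ^ k * (q : ℂ) ^ (k.choose 2) / qPochC (q : ℂ) (q : ℂ) k) * s ^ k
        = (-1 : ℂ) ^ k * (q : ℂ) ^ (k.choose 2) * (((Pq q k)⁻¹ : ℝ) : ℂ) * s ^ k := by
      rw [qPochC_eq, div_eq_mul_inv, Complex.ofReal_inv]
    rw [hval]
    apply Tendsto.congr' _ h5
    filter_upwards [eventually_ge_atTop k] with n hn
    rw [qcc, if_pos hn]
  -- summable bound
  have hb : Summable (fun k : ℕ => q ^ (k.choose 2) * ((‖s‖ + 1) / (1 - q)) ^ k) :=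
    bsummable hq0 hq1 (by positivity)
  -- dominated convergence
  have hDC := tendsto_tsum_of_dominated_convergence hb hpt
    (Filter.Eventually.of_forall (fun n k => qcc_bound hq0 hq1 s n k))
  -- the partial sums equal the partial products
  have hfin : ∀ n : ℕ, (∑' k : ℕ, qcc q n k * s ^ k)
      = ∏ j ∈ Finset.range n, (1 - s * (q : ℂ) ^ j) := by
    intro n
    rw [qbinom hq0 hq1 s n]
    apply tsum_eq_sum
    intro k hk
    have hkn : ¬ k ≤ n := by
      intro h
      exact hk (Finset.mem_range.2 (by omega))
    rw [qcc, if_neg hkn, zero_mul]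
  have hDC' : Tendsto (fun n : ℕ => ∏ j ∈ Finset.range n, (1 - s * (q : ℂ) ^ j)) atTop
      (𝓝 (∑' k : ℕ, ((-1) ^ k * (q : ℂ) ^ (k.choose 2) / qPochC (q : ℂ) (q : ℂ) k) * s ^ k)) := by
    apply Tendsto.congr _ hDC
    intro n
    exact hfin n
  -- the partial products converge to the infinite product
  have hM := mult_aux hq0 hq1 s
  have hL : Tendsto (fun n : ℕ => ∏ j ∈ Finset.range n, (1 - s * (q : ℂ) ^ j)) atTop
      (𝓝 (qPochInfC s (q : ℂ))) := hM.hasProd.tendsto_prod_nat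
  exact tendsto_nhds_unique hL hDC'
end
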